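/- Let ε > 0 and let μ be a K-Voronoi probability measure on ℝ^D × {0,1} with respect to vectors θ_1, …, θ_K ∈ ℝ^D that is globally balanced, i.e. μ(Z=0) = μ(Z=1) = 1/2, and suppose that I_V(X → Z) < ε, where V is the family of binary log-linear models on ℝ^D (the guardedness hypothesis). Then for every η > 0 there exists a multiclass log-linear model — given by the parameter vectors θ*_{s'} = Σ_{k=1}^K s'_k θ_k for s' ∈ {−1,1}^K, whose argmax prediction Ŷ = argmax_{s'∈{−1,1}^K} θ*_{s'}ᵀX is μ-almost surely uniquely defined — such that I_V(Ŷ → Z) > 1 − η, where Ŷ is encoded as a one-hot vector in ℝ^{2^K}, V denotes the family of binary log-linear models on ℝ^{2^K}, and V-information is computed with logarithms to base 2. -/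

import Mathlib

open MeasureTheory
open scoped BigOperators

/-- The logistic function `σ(u) = 1/(1+exp(−u))`. -/
noncomputable def logistic (u : ℝ) : ℝ := 1 / (1 + Real.exp (-u))

/-- A binary log-linear model with parameters `a, γ`: the conditional probability it
assigns to the label `z ∈ {0,1}` (encoded as a `Bool`) given input `x`, namely
`q(1|x) = σ(aᵀx+γ)` and `q(0|x) = 1 − σ(aᵀx+γ)`. -/
noncomputable def qLogLin {ι : Type*} [Fintype ι] (a : ι → ℝ) (γ : ℝ)
    (x : ι → ℝ) (z : Bool) : ℝ :=
  if z then logistic ((∑ i, a i * x i) + γ) else 1 - logistic ((∑ i, a i * x i) + γ)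

/-- The conditional `V`-entropy `H_V(Z|X) = −sup_{q∈V} E[log₂ q(z|x)]` for the family
`V` of binary log-linear models (logarithms to base 2). -/
noncomputable def condEntLL {ι : Type*} [Fintype ι]
    (μ : Measure ((ι → ℝ) × Bool)) : ℝ :=
  - ⨆ p : (ι → ℝ) × ℝ, ∫ w, Real.logb 2 (qLogLin p.1 p.2 w.1 w.2) ∂μ

/-- The `V`-entropy `H_V(Z) = −sup E[log₂ q(z)]` over input-independent members of `V`
(those with `a = 0`). -/
noncomputable def entLL {ι : Type*} [Fintype ι]
    (μ : Measure ((ι → ℝ) × Bool)) : ℝ :=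
  - ⨆ γ : ℝ, ∫ w, Real.logb 2 (qLogLin (fun _ : ι => (0:ℝ)) γ w.1 w.2) ∂μ

/-- The `V`-information `I_V(X → Z) = H_V(Z) − H_V(Z|X)` (base-2 logarithms). -/
noncomputable def vInfoLL {ι : Type*} [Fintype ι]
    (μ : Measure ((ι → ℝ) × Bool)) : ℝ :=
  entLL μ - condEntLL μ

/-- The score of `x` under the linear classifier with parameter vector
`θ*_{s'} = Σ_k s'_k θ_k`, where the sign pattern `s'` is encoded as a Boolean vector
(`true ↦ +1`, `false ↦ −1`): `θ*_{s'}ᵀx = Σ_k s'_k (θ_kᵀx)`. -/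
noncomputable def signScore {D K : ℕ} (θ : Fin K → Fin D → ℝ) (x : Fin D → ℝ)
    (s' : Fin K → Bool) : ℝ :=
  ∑ k, (if s' k then (1:ℝ) else -1) * (∑ d, θ k d * x d)

/-- The sign pattern of `x` with respect to `θ_1, …, θ_K`. -/
noncomputable def sgnPattern {D K : ℕ} (θ : Fin K → Fin D → ℝ) (x : Fin D → ℝ) :
    Fin K → Bool :=
  fun k => decide (0 < ∑ d, θ k d * x d)

/- ### Auxiliary lemmas -/

lemma logistic_pos (u : ℝ) : 0 < logistic u := by
  unfold logistic; positivity

lemma logistic_lt_one (u : ℝ) : logistic u < 1 := by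
  unfold logistic
  rw [div_lt_one (by positivity)]
  nlinarith [Real.exp_pos (-u)]

lemma one_sub_logistic_neg (c : ℝ) : 1 - logistic (-c) = logistic c := by
  unfold logistic
  rw [neg_neg, Real.exp_neg]
  have h := Real.exp_pos c
  field_simp
  ring

lemma logistic_eq (t' : ℝ) (h0 : 0 < t') (h1 : t' < 1) :
    logistic (-Real.log (1/t' - 1)) = t' := by
  unfold logistic
  rw [neg_neg, Real.exp_log (by rw [sub_pos, lt_div_iff₀ h0]; linarith)]
  field_simp
  ring

lemma int_bool_split {α : Type*} [MeasurableSpace α] (m : Measure (α × Bool))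
    [IsProbabilityMeasure m] (A B : ℝ) :
    ∫ w, (if w.2 then A else B) ∂m
      = A * (m {w | w.2 = true}).toReal + B * (m {w | w.2 = false}).toReal := by
  have hS : MeasurableSet {w : α × Bool | w.2 = true} :=
    measurable_snd (measurableSet_singleton true)
  have hS' : MeasurableSet {w : α × Bool | w.2 = false} :=
    measurable_snd (measurableSet_singleton false)
  have hfun : (fun w : α × Bool => if w.2 then A else B)
      = fun w => B + ({w : α × Bool | w.2 = true}.indicator (fun _ => A - B) w) := by
    funext w
    by_cases h : w.2 <;> simp [Set.indicator_apply, h]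
  rw [hfun, integral_add (integrable_const B)
        ((integrable_const (A - B)).indicator hS)]
  rw [integral_const, integral_indicator_const _ hS]
  have hadd : m {w : α × Bool | w.2 = true} + m {w : α × Bool | w.2 = false} = 1 := by
    rw [← measure_union _ hS']
    · have : ({w : α × Bool | w.2 = true} ∪ {w | w.2 = false}) = Set.univ := by
        ext w; by_cases h : w.2 <;> simp [h]
      rw [this, measure_univ]
    · refine Set.disjoint_left.mpr ?_
      intro w h1 h2
      simp only [Set.mem_setOf_eq] at h1 h2
      rw [h1] at h2; exact absurd h2 (by simp)
  have h1 : (m {w : α × Bool | w.2 = true}).toReal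
      + (m {w : α × Bool | w.2 = false}).toReal = 1 := by
    rw [← ENNReal.toReal_add (measure_ne_top _ _) (measure_ne_top _ _), hadd]; simp
  simp only [measureReal_def, measure_univ, ENNReal.toReal_one, smul_eq_mul, one_mul]
  linear_combination (-B) * h1

lemma qLogLin_pos {ι : Type*} [Fintype ι] (a : ι → ℝ) (γ : ℝ) (x : ι → ℝ) (z : Bool) :
    0 < qLogLin a γ x z := by
  unfold qLogLin
  by_cases h : z <;> simp [h]
  · exact logistic_pos _
  · exact logistic_lt_one _

lemma qLogLin_le_one {ι : Type*} [Fintype ι] (a : ι → ℝ) (γ : ℝ) (x : ι → ℝ) (z : Bool) :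
    qLogLin a γ x z ≤ 1 := by
  unfold qLogLin
  by_cases h : z <;> simp [h]
  · exact (logistic_lt_one _).le
  · linarith [logistic_pos ((∑ i, a i * x i) + γ)]

lemma measurable_logb_qLogLin {ι : Type*} [Fintype ι] (a : ι → ℝ) (γ : ℝ) :
    Measurable fun w : ((ι → ℝ) × Bool) => Real.logb 2 (qLogLin a γ w.1 w.2) := by
  have hlog : Continuous logistic := by
    unfold logistic
    apply Continuous.div continuous_const (by continuity)
    intro x; positivity
  have hS : Measurable fun w : ((ι → ℝ) × Bool) => (∑ i, a i * w.1 i) + γ :=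
    (Finset.measurable_sum _ fun i _ =>
      ((measurable_pi_apply i).comp measurable_fst).const_mul _).add_const _
  have hq : Measurable fun w : ((ι → ℝ) × Bool) => qLogLin a γ w.1 w.2 := by
    unfold qLogLin
    exact Measurable.ite (measurable_snd (measurableSet_singleton true))
      (hlog.measurable.comp hS) (measurable_const.sub (hlog.measurable.comp hS))
  simpa [Real.logb] using (Real.measurable_log.comp hq).div_const (Real.log 2)

/-- Multiclass log-linear models can break log-linear guardedness: if `μ` is a
globally balanced `K`-Voronoi distribution on `ℝ^D × {0,1}` which is `ε`-guarded with
respect to binary log-linear models (`I_V(X → Z) < ε`), then for every `η > 0` the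
multiclass log-linear model with parameter vectors `θ*_{s'} = Σ_k s'_k θ_k`
(`s' ∈ {−1,1}^K`) has a μ-a.s. uniquely defined argmax prediction
`Ŷ = argmax_{s'} θ*_{s'}ᵀX` — the sign pattern of `X` — and, encoding `Ŷ` as a one-hot
vector in `ℝ^{2^K}`, it satisfies `I_V(Ŷ → Z) > 1 − η` (base-2 logarithms). -/
theorem multiclass_breaks_guardedness
    (D K : ℕ) (ε : ℝ) (hε : 0 < ε)
    (μ : Measure ((Fin D → ℝ) × Bool)) [IsProbabilityMeasure μ]
    (θ : Fin K → Fin D → ℝ)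
    (hne : ∀ᵐ w ∂μ, ∀ k, (∑ d, θ k d * w.1 d) ≠ 0)
    (g : (Fin K → Bool) → Bool)
    (hg : ∀ᵐ w ∂μ, w.2 = g (sgnPattern θ w.1))
    (hbal0 : μ {w | w.2 = false} = 1/2) (hbal1 : μ {w | w.2 = true} = 1/2)
    (hguard : vInfoLL μ < ε) :
    ∀ η > (0:ℝ),
      (∀ᵐ w ∂μ, ∀ s' : Fin K → Bool, s' ≠ sgnPattern θ w.1 →
          signScore θ w.1 s' < signScore θ w.1 (sgnPattern θ w.1)) ∧
      vInfoLL (μ.map (fun w =>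
          ((fun s' : Fin K → Bool => if s' = sgnPattern θ w.1 then (1:ℝ) else 0), w.2)))
        > 1 - η := by
  intro η hη
  constructor
  · -- argmax uniqueness
    filter_upwards [hne] with w hw
    intro s' hs'
    unfold signScore
    apply Finset.sum_lt_sum
    · intro k _
      have hk := hw k
      rcases hk.lt_or_gt with h | h
      · have hs0 : sgnPattern θ w.1 k = false := by
          simp [sgnPattern, not_lt.2 h.le]
        rw [hs0]
        by_cases hs : s' k <;> simp [hs] <;> nlinarith
      · have hs0 : sgnPattern θ w.1 k = true := by simp [sgnPattern, h]
        rw [hs0]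
        by_cases hs : s' k <;> simp [hs] <;> nlinarith
    · obtain ⟨k, hk⟩ := Function.ne_iff.mp hs'
      refine ⟨k, Finset.mem_univ k, ?_⟩
      have hkne := hw k
      rcases hkne.lt_or_gt with h | h
      · have hs0 : sgnPattern θ w.1 k = false := by
          simp [sgnPattern, not_lt.2 h.le]
        rw [hs0] at hk ⊢
        have : s' k = true := by
          cases hsk : s' k
          · exact absurd hsk hk
          · rfl
        rw [this]; simp; nlinarith
      · have hs0 : sgnPattern θ w.1 k = true := by simp [sgnPattern, h]
        rw [hs0] at hk ⊢
        have : s' k = false := by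
          cases hsk : s' k
          · rfl
          · exact absurd hsk hk
        rw [this]; simp; nlinarith
  · -- information bound
    set F : ((Fin D → ℝ) × Bool) → (((Fin K → Bool) → ℝ) × Bool) :=
      fun w => ((fun s' : Fin K → Bool => if s' = sgnPattern θ w.1 then (1:ℝ) else 0), w.2)
      with hFdef
    have hsgn : Measurable (fun x : Fin D → ℝ => sgnPattern θ x) := by
      apply measurable_pi_lambda
      intro k
      have hL : Measurable fun x : Fin D → ℝ => ∑ d, θ k d * x d :=
        Finset.measurable_sum _ fun d _ => (measurable_pi_apply d).const_mul _
      have : (fun x : Fin D → ℝ => sgnPattern θ x k)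
          = fun x => if 0 < ∑ d, θ k d * x d then true else false := by
        funext x
        by_cases h : 0 < ∑ d, θ k d * x d <;> simp [sgnPattern, h]
      rw [this]
      exact Measurable.ite (measurableSet_lt measurable_const hL)
        measurable_const measurable_const
    have honehot : Measurable
        (fun s : Fin K → Bool => (fun s' => if s' = s then (1:ℝ) else 0)) :=
      measurable_of_countable _
    have hF : Measurable F :=
      ((honehot.comp (hsgn.comp measurable_fst))).prodMk measurable_snd
    set ν : Measure (((Fin K → Bool) → ℝ) × Bool) := μ.map F with hνdef
    haveI : IsProbabilityMeasure ν := Measure.isProbabilityMeasure_map hF.aemeasurable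
    -- measures of label sets under ν
    have hSt : MeasurableSet {w : ((Fin K → Bool) → ℝ) × Bool | w.2 = true} :=
      measurable_snd (measurableSet_singleton true)
    have hSf : MeasurableSet {w : ((Fin K → Bool) → ℝ) × Bool | w.2 = false} :=
      measurable_snd (measurableSet_singleton false)
    have hνt : ν {w | w.2 = true} = 1/2 := by
      rw [hνdef, Measure.map_apply hF hSt]
      exact hbal1
    have hνf : ν {w | w.2 = false} = 1/2 := by
      rw [hνdef, Measure.map_apply hF hSf]
      exact hbal0
    -- entropy lower bound: entLL ν ≥ 1
    have hent : (1:ℝ) ≤ entLL ν := by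
      have hsup : (⨆ γ : ℝ, ∫ w, Real.logb 2
          (qLogLin (fun _ : (Fin K → Bool) => (0:ℝ)) γ w.1 w.2) ∂ν) ≤ -1 := by
        apply ciSup_le
        intro γ
        have hform : (fun w : ((Fin K → Bool) → ℝ) × Bool =>
              Real.logb 2 (qLogLin (fun _ : (Fin K → Bool) => (0:ℝ)) γ w.1 w.2))
            = fun w => (if w.2 then Real.logb 2 (logistic γ)
                else Real.logb 2 (1 - logistic γ)) := by
          funext w
          unfold qLogLin
          by_cases h : w.2 <;> simp [h]
        rw [hform, int_bool_split, hνt, hνf]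
        have h2 : ((1:ENNReal)/2).toReal = (1:ℝ)/2 := by simp
        rw [h2]
        have hσ0 := logistic_pos γ
        have hσ1 := logistic_lt_one γ
        have hAB : Real.logb 2 (logistic γ) + Real.logb 2 (1 - logistic γ)
            = Real.logb 2 (logistic γ * (1 - logistic γ)) :=
          (Real.logb_mul (ne_of_gt hσ0) (by linarith)).symm
        have hq : logistic γ * (1 - logistic γ) ≤ 1/4 := by nlinarith [sq_nonneg (logistic γ - 1/2)]
        have hle : Real.logb 2 (logistic γ * (1 - logistic γ))
            ≤ Real.logb 2 ((1:ℝ)/4) :=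
          Real.logb_le_logb_of_le one_lt_two (mul_pos hσ0 (by linarith)) hq
        have h14 : Real.logb 2 ((1:ℝ)/4) = -2 := by
          have h4 : (2:ℝ) ^ (2:ℝ) = 4 := by
            have h := Real.rpow_natCast (2:ℝ) 2
            push_cast at h
            rw [h]; norm_num
          have heq : ((1:ℝ)/4) = (2:ℝ) ^ (-2 : ℝ) := by
            rw [show (-2:ℝ) = -(2:ℝ) from rfl, Real.rpow_neg (by norm_num), h4]
            norm_num
          rw [heq, Real.logb_rpow (by norm_num) (by norm_num)]
        linarith
      unfold entLL
      linarith
    -- conditional entropy upper bound: condEntLL ν < η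
    have hcond : condEntLL ν < η := by
      set t : ℝ := (2:ℝ) ^ (-η) with htdef
      have ht0 : 0 < t := Real.rpow_pos_of_pos (by norm_num) _
      have ht1 : t < 1 := Real.rpow_lt_one_of_one_lt_of_neg one_lt_two (by linarith)
      set t' : ℝ := (1 + t)/2 with ht'def
      have ht'0 : 0 < t' := by rw [ht'def]; linarith
      have ht'1 : t' < 1 := by rw [ht'def]; linarith
      have htt' : t < t' := by rw [ht'def]; linarith
      set c : ℝ := -Real.log (1/t' - 1) with hcdef
      have hc : logistic c = t' := logistic_eq t' ht'0 ht'1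
      have hlogb : -η < Real.logb 2 t' :=
        (Real.lt_logb_iff_rpow_lt one_lt_two ht'0).mpr htt'
      set a : (Fin K → Bool) → ℝ := fun s' => if g s' then c else -c with hadef
      have hbdd : BddAbove (Set.range fun p : ((Fin K → Bool) → ℝ) × ℝ =>
          ∫ w, Real.logb 2 (qLogLin p.1 p.2 w.1 w.2) ∂ν) := by
        refine ⟨0, ?_⟩
        rintro _ ⟨p, rfl⟩
        exact integral_nonpos fun w =>
          Real.logb_nonpos one_lt_two (qLogLin_pos _ _ _ _).le (qLogLin_le_one _ _ _ _)
      have hint : ∫ w, Real.logb 2 (qLogLin a 0 w.1 w.2) ∂ν = Real.logb 2 t' := by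
        rw [hνdef, integral_map hF.aemeasurable
          (measurable_logb_qLogLin a 0).aestronglyMeasurable]
        have hae : ∀ᵐ w ∂μ,
            Real.logb 2 (qLogLin a 0 (F w).1 (F w).2) = Real.logb 2 t' := by
          filter_upwards [hg] with w hw
          have hsum : (∑ s' : Fin K → Bool,
              a s' * (if s' = sgnPattern θ w.1 then (1:ℝ) else 0))
              = a (sgnPattern θ w.1) := by
            simp [mul_ite, mul_one, mul_zero, Finset.sum_ite_eq]
          have hFw2 : (F w).2 = w.2 := rfl
          rw [hFw2]
          unfold qLogLin
          simp only [hFdef, hsum]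
          rw [hw]
          cases hgs : g (sgnPattern θ w.1)
          · simp only [hgs, hadef, Bool.false_eq_true, if_false, add_zero]
            rw [one_sub_logistic_neg, hc]
          · simp only [hgs, hadef, if_true, add_zero]
            rw [hc]
        rw [integral_congr_ae hae, integral_const]
        simp
      have hle : Real.logb 2 t' ≤ ⨆ p : ((Fin K → Bool) → ℝ) × ℝ,
          ∫ w, Real.logb 2 (qLogLin p.1 p.2 w.1 w.2) ∂ν := by
        have := le_ciSup hbdd ((a, (0:ℝ)) : ((Fin K → Bool) → ℝ) × ℝ)
        rw [show ((a, (0:ℝ)) : ((Fin K → Bool) → ℝ) × ℝ).1 = a from rfl] at this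
        rw [← hint]
        exact this
      unfold condEntLL
      linarith
    unfold vInfoLL
    linarith
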